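/- arXiv:1204.2777 — 2 statements merged into one kernel-verified Lean document; each statement's English description precedes it below -/
import Mathlib

section
/- For the PDE α u₃u₁₂ + β u₂u₁₃ + γ u₁u₂₃ = 0 with α = a−b, β = b−c, γ = c−a, the vector fields X = ∂₃ − ((λ−b)/(λ−c))(u₃/u₁)∂₁ and Y = ∂₂ − ((λ−b)/(λ−a))(u₂/u₁)∂₁ commute for every λ ∉ {a,c} if and only if u satisfies the PDE, on the region where u₁ ≠ 0. -/
/-- Partial derivative in the `i`-th coordinate direction. -/
noncomputable def pd (i : Fin 3) (f : (Fin 3 → ℝ) → ℝ) (x : Fin 3 → ℝ) : ℝ :=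
  fderiv ℝ f x (Pi.single i 1)

/-- Lie bracket of vector fields on `ℝ³`, given by their coefficient functions. -/
noncomputable def lieBracket (X Y : (Fin 3 → ℝ) → Fin 3 → ℝ)
    (x : Fin 3 → ℝ) (i : Fin 3) : ℝ :=
  ∑ j : Fin 3, (X x j * pd j (fun y => Y y i) x - Y x j * pd j (fun y => X y i) x)

lemma pd_eq (i : Fin 3) (f : (Fin 3 → ℝ) → ℝ) (x : Fin 3 → ℝ) :
    pd i f x = fderiv ℝ f x (Pi.single i 1) := rfl

lemma pd_const (i : Fin 3) (x : Fin 3 → ℝ) (k : ℝ) : pd i (fun _ => k) x = 0 := by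
  simp [pd_eq]

/-- Derivative of a coefficient `-(k * (g/h))`. -/
lemma pd_coeff (k : ℝ) (g h : (Fin 3 → ℝ) → ℝ) (x : Fin 3 → ℝ) (j : Fin 3)
    (hg : DifferentiableAt ℝ g x) (hh : DifferentiableAt ℝ h x) (hx : h x ≠ 0) :
    pd j (fun y => -(k * (g y / h y))) x
      = -(k * ((pd j g x * h x - g x * pd j h x) / (h x) ^ 2)) := by
  have hinv : HasFDerivAt (fun y => (h y)⁻¹) ((-(h x ^ 2)⁻¹) • fderiv ℝ h x) x :=
    (hasDerivAt_inv hx).comp_hasFDerivAt x hh.hasFDerivAt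
  have hmul : HasFDerivAt (fun y => g y * (h y)⁻¹)
      (g x • ((-(h x ^ 2)⁻¹) • fderiv ℝ h x) + (h x)⁻¹ • fderiv ℝ g x) x :=
    hg.hasFDerivAt.mul hinv
  have hfin : HasFDerivAt (fun y => -(k * (g y / h y)))
      (-(k • (g x • ((-(h x ^ 2)⁻¹) • fderiv ℝ h x) + (h x)⁻¹ • fderiv ℝ g x))) x := by
    have := (hmul.const_mul k).neg
    simp only [div_eq_mul_inv]
    exact this
  rw [pd_eq, hfin.fderiv]
  simp only [ContinuousLinearMap.neg_apply, ContinuousLinearMap.smul_apply,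
    ContinuousLinearMap.add_apply, smul_eq_mul, ← pd_eq]
  field_simp
  ring

/-- For the PDE `α u₃u₁₂ + β u₂u₁₃ + γ u₁u₂₃ = 0` with `α = a−b`, `β = b−c`,
`γ = c−a`, the vector fields `X = ∂₃ − ((λ−b)/(λ−c))(u₃/u₁)∂₁` and
`Y = ∂₂ − ((λ−b)/(λ−a))(u₂/u₁)∂₁` commute for every `λ ∉ {a, c}` iff `u`
satisfies the PDE, on the region `u₁ ≠ 0`. -/
theorem lax_pair_11_11_11
    (a b c : ℝ) (hab : a ≠ b) (hbc : b ≠ c) (hac : a ≠ c)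
    (u : (Fin 3 → ℝ) → ℝ) (hu : ContDiff ℝ 2 u)
    (hu1 : ∀ x, pd 0 u x ≠ 0) :
    (∀ l : ℝ, l ≠ a → l ≠ c → ∀ x, ∀ i : Fin 3,
      lieBracket
        (fun x => ![-((l - b) / (l - c) * (pd 2 u x / pd 0 u x)), 0, 1])
        (fun x => ![-((l - b) / (l - a) * (pd 1 u x / pd 0 u x)), 1, 0])
        x i = 0) ↔
    (∀ x, (a - b) * pd 2 u x * pd 0 (pd 1 u) x
        + (b - c) * pd 1 u x * pd 0 (pd 2 u) x
        + (c - a) * pd 0 u x * pd 1 (pd 2 u) x = 0) := by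
  -- Differentiability of first derivatives
  have hpdc : ∀ i : Fin 3, ContDiff ℝ 1 (pd i u) := by
    intro i
    exact (hu.fderiv_right (m := 1) (by norm_num)).clm_apply contDiff_const
  have hpdd : ∀ (i : Fin 3) x, DifferentiableAt ℝ (pd i u) x := fun i x =>
    ((hpdc i).differentiable one_ne_zero).differentiableAt
  -- Symmetry of second derivatives
  have hdf : ∀ x, DifferentiableAt ℝ (fderiv ℝ u) x := fun x =>
    ((hu.fderiv_right (m := 1) (by norm_num)).differentiable one_ne_zero) x
  have hrepr : ∀ (i j : Fin 3) x,
      pd i (pd j u) x = fderiv ℝ (fderiv ℝ u) x (Pi.single i 1) (Pi.single j 1) := by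
    intro i j x
    show fderiv ℝ (fun y => fderiv ℝ u y (Pi.single j 1)) x (Pi.single i 1) = _
    rw [fderiv_clm_apply (hdf x) (differentiableAt_const _)]
    simp
  have hsymm : ∀ (i j : Fin 3) x, pd i (pd j u) x = pd j (pd i u) x := by
    intro i j x
    rw [hrepr, hrepr]
    exact (hu.contDiffAt.isSymmSndFDerivAt (by norm_num)) _ _
  -- The bracket vanishes automatically in components 1 and 2
  have h12 : ∀ (l : ℝ) x (i : Fin 3), i ≠ 0 →
      lieBracket
        (fun x => ![-((l - b) / (l - c) * (pd 2 u x / pd 0 u x)), 0, 1])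
        (fun x => ![-((l - b) / (l - a) * (pd 1 u x / pd 0 u x)), 1, 0])
        x i = 0 := by
    intro l x i hi
    fin_cases i
    · exact absurd rfl hi
    · simp [lieBracket, Fin.sum_univ_three, pd_const]
    · simp [lieBracket, Fin.sum_univ_three, pd_const]
  -- The key identity for component 0
  have hbridge : ∀ (l : ℝ), l ≠ a → l ≠ c → ∀ x,
      (l - a) * (l - c) * (pd 0 u x) ^ 2 *
      lieBracket
        (fun x => ![-((l - b) / (l - c) * (pd 2 u x / pd 0 u x)), 0, 1])
        (fun x => ![-((l - b) / (l - a) * (pd 1 u x / pd 0 u x)), 1, 0])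
        x 0
      = (l - b) * ((a - b) * pd 2 u x * pd 0 (pd 1 u) x
          + (b - c) * pd 1 u x * pd 0 (pd 2 u) x
          + (c - a) * pd 0 u x * pd 1 (pd 2 u) x) := by
    intro l hla hlc x
    have hla' : l - a ≠ 0 := sub_ne_zero.mpr hla
    have hlc' : l - c ≠ 0 := sub_ne_zero.mpr hlc
    have hp : pd 0 u x ≠ 0 := hu1 x
    simp only [lieBracket, Fin.sum_univ_three, Matrix.cons_val_zero, Matrix.cons_val_one,
      Matrix.head_cons, Matrix.cons_val_two, Matrix.tail_cons]
    rw [pd_coeff _ _ _ _ 0 (hpdd 1 x) (hpdd 0 x) hp,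
        pd_coeff _ _ _ _ 1 (hpdd 1 x) (hpdd 0 x) hp,
        pd_coeff _ _ _ _ 2 (hpdd 1 x) (hpdd 0 x) hp,
        pd_coeff _ _ _ _ 0 (hpdd 2 x) (hpdd 0 x) hp,
        pd_coeff _ _ _ _ 1 (hpdd 2 x) (hpdd 0 x) hp,
        pd_coeff _ _ _ _ 2 (hpdd 2 x) (hpdd 0 x) hp]
    rw [hsymm 1 0 x, hsymm 2 0 x, hsymm 2 1 x]
    field_simp
    ring
  constructor
  · intro h x
    set l : ℝ := 1 + max a (max b c) with hl
    have hmax : ∀ t : ℝ, t ≤ max a (max b c) → t < l := by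
      intro t ht; simpa [hl] using lt_of_le_of_lt ht (by linarith [le_refl (max a (max b c))])
    have hla : l ≠ a := ne_of_gt (hmax a (le_max_left _ _))
    have hlb : l ≠ b := ne_of_gt (hmax b (le_trans (le_max_left _ _) (le_max_right _ _)))
    have hlc : l ≠ c := ne_of_gt (hmax c (le_trans (le_max_right _ _) (le_max_right _ _)))
    have hb := hbridge l hla hlc x
    rw [h l hla hlc x 0, mul_zero] at hb
    have hlb' : l - b ≠ 0 := sub_ne_zero.mpr hlb
    rcases mul_eq_zero.mp hb.symm with h1 | h2
    · exact absurd h1 hlb'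
    · exact h2
  · intro hE l hla hlc x i
    by_cases hi : i = 0
    · subst hi
      have hb := hbridge l hla hlc x
      rw [hE x, mul_zero] at hb
      have hla' : l - a ≠ 0 := sub_ne_zero.mpr hla
      have hlc' : l - c ≠ 0 := sub_ne_zero.mpr hlc
      have hne : (l - a) * (l - c) * (pd 0 u x) ^ 2 ≠ 0 :=
        mul_ne_zero (mul_ne_zero hla' hlc') (pow_ne_zero _ (hu1 x))
      exact (mul_eq_zero.mp hb).resolve_left hne
    · exact h12 l x i hi
end

section
/- The vector fields X = ∂₂ + (λ − u₃)∂₃ and Y = ∂₁ + (λ² − λu₃ + u₂)∂₃ commute for all values of λ if and only if u satisfies u₂₂ + u₁₃ + u₂u₃₃ − u₃u₂₃ = 0. -/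
lemma pd_diffAt {u : (Fin 3 → ℝ) → ℝ} (hu : ContDiff ℝ 2 u) (j : Fin 3) (x : Fin 3 → ℝ) :
    DifferentiableAt ℝ (pd j u) x := by
  have h1 : ContDiff ℝ 1 (fderiv ℝ u) := hu.fderiv_right (by norm_num)
  have : pd j u = fun y => (ContinuousLinearMap.apply ℝ ℝ (Pi.single j 1)) (fderiv ℝ u y) := rfl
  rw [this]
  exact ((ContinuousLinearMap.apply ℝ ℝ (Pi.single j 1)).differentiable.comp
    (h1.differentiable (by norm_num))).differentiableAt

lemma pd_pd {u : (Fin 3 → ℝ) → ℝ} (hu : ContDiff ℝ 2 u) (i j : Fin 3) (x : Fin 3 → ℝ) :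
    pd i (pd j u) x = fderiv ℝ (fderiv ℝ u) x (Pi.single i 1) (Pi.single j 1) := by
  have h1 : ContDiff ℝ 1 (fderiv ℝ u) := hu.fderiv_right (by norm_num)
  have hdf : DifferentiableAt ℝ (fderiv ℝ u) x := (h1.differentiable (by norm_num)) x
  have h : HasFDerivAt (⇑(ContinuousLinearMap.apply ℝ ℝ (Pi.single j 1)) ∘ fderiv ℝ u)
      ((ContinuousLinearMap.apply ℝ ℝ (Pi.single j 1)).comp (fderiv ℝ (fderiv ℝ u) x)) x :=
    (ContinuousLinearMap.apply ℝ ℝ (Pi.single j 1)).hasFDerivAt.comp x hdf.hasFDerivAt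
  have hfe : fderiv ℝ (pd j u) x
      = (ContinuousLinearMap.apply ℝ ℝ (Pi.single j 1)).comp (fderiv ℝ (fderiv ℝ u) x) :=
    h.fderiv
  show fderiv ℝ (pd j u) x (Pi.single i 1) = _
  rw [hfe]
  rfl

lemma pd_symm {u : (Fin 3 → ℝ) → ℝ} (hu : ContDiff ℝ 2 u) (i j : Fin 3) (x : Fin 3 → ℝ) :
    pd i (pd j u) x = pd j (pd i u) x := by
  have h1 : ContDiff ℝ 1 (fderiv ℝ u) := hu.fderiv_right (by norm_num)
  rw [pd_pd hu, pd_pd hu]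
  exact second_derivative_symmetric
    (fun y => ((hu.differentiable (by norm_num)) y).hasFDerivAt)
    ((h1.differentiable (by norm_num) x).hasFDerivAt) _ _

lemma pd_X2 {u : (Fin 3 → ℝ) → ℝ} (l : ℝ) (j : Fin 3) (x : Fin 3 → ℝ) :
    pd j (fun y => l - pd 2 u y) x = -(pd j (pd 2 u) x) := by
  show fderiv ℝ (fun y => l - pd 2 u y) x (Pi.single j 1) = _
  rw [fderiv_const_sub]
  rfl

lemma pd_Y2 {u : (Fin 3 → ℝ) → ℝ} (hu : ContDiff ℝ 2 u) (l : ℝ) (j : Fin 3) (x : Fin 3 → ℝ) :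
    pd j (fun y => l ^ 2 - l * pd 2 u y + pd 1 u y) x
      = -(l * pd j (pd 2 u) x) + pd j (pd 1 u) x := by
  have h2 := pd_diffAt hu 2 x
  have h1 := pd_diffAt hu 1 x
  show fderiv ℝ (fun y => l ^ 2 - l * pd 2 u y + pd 1 u y) x (Pi.single j 1) = _
  rw [fderiv_fun_add ((h2.const_mul l).const_sub _) h1, fderiv_const_sub, fderiv_const_mul h2]
  simp [pd, mul_comm]

/-- The vector fields `X = ∂₂ + (λ − u₃)∂₃` and `Y = ∂₁ + (λ² − λu₃ + u₂)∂₃`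
commute for all values of `λ` iff `u` satisfies
`u₂₂ + u₁₃ + u₂u₃₃ − u₃u₂₃ = 0`. -/
theorem lax_pair_123
    (u : (Fin 3 → ℝ) → ℝ) (hu : ContDiff ℝ 2 u) :
    (∀ l : ℝ, ∀ x, ∀ i : Fin 3,
      lieBracket
        (fun x => ![0, 1, l - pd 2 u x])
        (fun x => ![1, 0, l ^ 2 - l * pd 2 u x + pd 1 u x])
        x i = 0) ↔
    (∀ x, pd 1 (pd 1 u) x + pd 0 (pd 2 u) x + pd 1 u x * pd 2 (pd 2 u) x
        - pd 2 u x * pd 1 (pd 2 u) x = 0) := by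
  have key : ∀ l : ℝ, ∀ x,
      lieBracket
        (fun x => ![0, 1, l - pd 2 u x])
        (fun x => ![1, 0, l ^ 2 - l * pd 2 u x + pd 1 u x]) x 2
      = pd 1 (pd 1 u) x + pd 0 (pd 2 u) x + pd 1 u x * pd 2 (pd 2 u) x
        - pd 2 u x * pd 1 (pd 2 u) x := by
    intro l x
    have hsym := pd_symm hu 1 2 x
    simp only [lieBracket, Fin.sum_univ_three, Matrix.cons_val_zero, Matrix.cons_val_one,
      Matrix.head_cons, Matrix.cons_val_two, Matrix.tail_cons, Matrix.head_fin_const]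
    rw [pd_X2, pd_X2, pd_X2, pd_Y2 hu, pd_Y2 hu, pd_Y2 hu]
    rw [show pd 2 (pd 1 u) x = pd 1 (pd 2 u) x from pd_symm hu 2 1 x]
    ring
  constructor
  · intro h x
    rw [← key 0 x]
    exact h 0 x 2
  · intro h l x i
    fin_cases i
    · simp only [lieBracket, Fin.sum_univ_three, Matrix.cons_val_zero, Matrix.cons_val_one,
        Matrix.head_cons, Matrix.cons_val_two, Matrix.tail_cons]
      simp [pd]
    · simp only [lieBracket, Fin.sum_univ_three, Matrix.cons_val_zero, Matrix.cons_val_one,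
        Matrix.head_cons, Matrix.cons_val_two, Matrix.tail_cons]
      simp [pd]
    · rw [show (⟨2, by norm_num⟩ : Fin 3) = 2 from rfl, key l x]
      exact h x
end
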